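/- Let {P_z}_{z=1}^t be a state two-design on a d-dimensional space B, and let ξ̃_{AB} be any matrix on A⊗B. Then Σ_z (d²/t²)·Tr[(Tr_B[(1_A⊗P_z)ξ̃_{AB}])·(Tr_B[(1_A⊗P_z)ξ̃_{AB}])†] = (d/(t(d+1)))·(Tr[ξ̃_A ξ̃_A†] + Tr[ξ̃_{AB} ξ̃_{AB}†]), where ξ̃_A = Tr_B[ξ̃_{AB}]. In particular the left side equals (1/t)·(d/(d+1))·(‖ξ̃_A‖₂² + ‖ξ̃_{AB}‖₂²) and hence is at least (1/t)·(d/(d+1))·‖ξ̃_{AB}‖₂². -/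

import Mathlib

open Matrix Kronecker
open scoped ComplexOrder

/-- Partial trace over the second (B) tensor factor. -/
noncomputable def ptraceB {A B : Type*} [Fintype A] [Fintype B]
    (M : Matrix (A × B) (A × B) ℂ) : Matrix A A ℂ :=
  Matrix.of fun i j => ∑ k : B, M (i, k) (j, k)

/-- The Hilbert–Schmidt (Frobenius) norm `‖M‖₂ = √(Tr[Mᴴ M])`. -/
noncomputable def frobNorm {n : Type*} [Fintype n] (M : Matrix n n ℂ) : ℝ :=
  Real.sqrt ((Mᴴ * M).trace.re)

/-- The swap operator F on B⊗B. -/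
def swapOp (B : Type*) [DecidableEq B] : Matrix (B × B) (B × B) ℂ :=
  Matrix.of fun p q => if p.1 = q.2 ∧ p.2 = q.1 then 1 else 0

noncomputable def Wmat {A B : Type*} [Fintype A] [Fintype B]
    (ξ : Matrix (A × B) (A × B) ℂ) : Matrix (B × B) (B × B) ℂ :=
  Matrix.of fun p q => ∑ i : A, ∑ j : A, ξ (i, p.1) (j, q.1) * star (ξ (i, q.2) (j, p.2))

lemma sum_swap6 {ι₁ ι₂ ι₃ ι₄ ι₅ ι₆ : Type*} [Fintype ι₁] [Fintype ι₂] [Fintype ι₃]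
    [Fintype ι₄] [Fintype ι₅] [Fintype ι₆] (f : ι₁ → ι₂ → ι₃ → ι₄ → ι₅ → ι₆ → ℂ) :
    (∑ a, ∑ b, ∑ c, ∑ d, ∑ e, ∑ g, f a b c d e g)
      = ∑ c, ∑ g, ∑ e, ∑ d, ∑ a, ∑ b, f a b c d e g := by
  calc (∑ a, ∑ b, ∑ c, ∑ d, ∑ e, ∑ g, f a b c d e g)
      = ∑ x : ι₁ × ι₂ × ι₃ × ι₄ × ι₅ × ι₆,
          f x.1 x.2.1 x.2.2.1 x.2.2.2.1 x.2.2.2.2.1 x.2.2.2.2.2 := by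
        simp [Fintype.sum_prod_type]
    _ = ∑ y : ι₃ × ι₆ × ι₅ × ι₄ × ι₁ × ι₂,
          f y.2.2.2.2.1 y.2.2.2.2.2 y.1 y.2.2.2.1 y.2.2.1 y.2.1 :=
        (Fintype.sum_equiv
          ⟨fun y => (y.2.2.2.2.1, y.2.2.2.2.2, y.1, y.2.2.2.1, y.2.2.1, y.2.1),
           fun x => (x.2.2.1, x.2.2.2.2.2, x.2.2.2.2.1, x.2.2.2.1, x.1, x.2.1),
           fun _ => rfl, fun _ => rfl⟩ _ _ (fun y => rfl)).symm
    _ = ∑ c, ∑ g, ∑ e, ∑ d, ∑ a, ∑ b, f a b c d e g := by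
        simp [Fintype.sum_prod_type]

lemma sum_swap4 {ι₁ ι₂ ι₃ ι₄ : Type*} [Fintype ι₁] [Fintype ι₂] [Fintype ι₃]
    [Fintype ι₄] (f : ι₁ → ι₂ → ι₃ → ι₄ → ℂ) :
    (∑ a, ∑ b, ∑ c, ∑ d, f a b c d) = ∑ c, ∑ d, ∑ a, ∑ b, f a b c d := by
  calc (∑ a, ∑ b, ∑ c, ∑ d, f a b c d)
      = ∑ x : ι₁ × ι₂ × ι₃ × ι₄, f x.1 x.2.1 x.2.2.1 x.2.2.2 := by
        simp [Fintype.sum_prod_type]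
    _ = ∑ y : ι₃ × ι₄ × ι₁ × ι₂, f y.2.2.1 y.2.2.2 y.1 y.2.1 :=
        (Fintype.sum_equiv
          ⟨fun y => (y.2.2.1, y.2.2.2, y.1, y.2.1),
           fun x => (x.2.2.1, x.2.2.2, x.1, x.2.1),
           fun _ => rfl, fun _ => rfl⟩ _ _ (fun y => rfl)).symm
    _ = ∑ c, ∑ d, ∑ a, ∑ b, f a b c d := by
        simp [Fintype.sum_prod_type]

lemma sum_swap4' {ι₁ ι₂ ι₃ ι₄ : Type*} [Fintype ι₁] [Fintype ι₂] [Fintype ι₃]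
    [Fintype ι₄] (f : ι₁ → ι₂ → ι₃ → ι₄ → ℂ) :
    (∑ a, ∑ b, ∑ c, ∑ d, f a b c d) = ∑ c, ∑ b, ∑ d, ∑ a, f a b c d := by
  calc (∑ a, ∑ b, ∑ c, ∑ d, f a b c d)
      = ∑ x : ι₁ × ι₂ × ι₃ × ι₄, f x.1 x.2.1 x.2.2.1 x.2.2.2 := by
        simp [Fintype.sum_prod_type]
    _ = ∑ y : ι₃ × ι₂ × ι₄ × ι₁, f y.2.2.2 y.2.1 y.1 y.2.2.1 :=
        (Fintype.sum_equiv
          ⟨fun y => (y.2.2.2, y.2.1, y.1, y.2.2.1),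
           fun x => (x.2.2.1, x.2.1, x.2.2.2, x.1),
           fun _ => rfl, fun _ => rfl⟩ _ _ (fun y => rfl)).symm
    _ = ∑ c, ∑ b, ∑ d, ∑ a, f a b c d := by
        simp [Fintype.sum_prod_type]

lemma lemA {A B : Type*} [Fintype A] [DecidableEq A] [Fintype B] [DecidableEq B]
    (P : Matrix B B ℂ) (hP : P.IsHermitian) (ξ : Matrix (A × B) (A × B) ℂ) :
    ((ptraceB (((1 : Matrix A A ℂ) ⊗ₖ P) * ξ)) *
      (ptraceB (((1 : Matrix A A ℂ) ⊗ₖ P) * ξ))ᴴ).trace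
      = ((P ⊗ₖ P) * Wmat ξ).trace := by
  have hN : ∀ i j : A, (ptraceB (((1 : Matrix A A ℂ) ⊗ₖ P) * ξ)) i j
      = ∑ k : B, ∑ b : B, P k b * ξ (i, b) (j, k) := by
    intro i j
    simp [ptraceB, Matrix.mul_apply, Fintype.sum_prod_type, Matrix.one_apply,
      ite_mul, zero_mul, mul_assoc]
  calc ((ptraceB (((1 : Matrix A A ℂ) ⊗ₖ P) * ξ)) *
      (ptraceB (((1 : Matrix A A ℂ) ⊗ₖ P) * ξ))ᴴ).trace
      = ∑ i : A, ∑ j : A, ∑ k : B, ∑ k' : B, ∑ b : B, ∑ b' : B,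
          (P k b * ξ (i, b) (j, k)) * (P b' k' * star (ξ (i, b') (j, k'))) := by
        simp only [Matrix.trace, Matrix.diag_apply, Matrix.mul_apply,
          Matrix.conjTranspose_apply, hN]
        refine Finset.sum_congr rfl fun i _ => Finset.sum_congr rfl fun j _ => ?_
        rw [star_sum, Finset.sum_mul_sum]
        refine Finset.sum_congr rfl fun k _ => Finset.sum_congr rfl fun k' _ => ?_
        rw [star_sum, Finset.sum_mul_sum]
        refine Finset.sum_congr rfl fun b _ => Finset.sum_congr rfl fun b' _ => ?_
        rw [star_mul', hP.apply]
    _ = ∑ k : B, ∑ b' : B, ∑ b : B, ∑ k' : B, ∑ i : A, ∑ j : A,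
          (P k b * ξ (i, b) (j, k)) * (P b' k' * star (ξ (i, b') (j, k'))) :=
        sum_swap6 _
    _ = ((P ⊗ₖ P) * Wmat ξ).trace := by
        simp only [Matrix.trace, Matrix.diag_apply, Matrix.mul_apply, Wmat,
          Matrix.of_apply, Matrix.kroneckerMap_apply, Fintype.sum_prod_type,
          Finset.mul_sum]
        refine Finset.sum_congr rfl fun k _ => Finset.sum_congr rfl fun b' _ =>
          Finset.sum_congr rfl fun b _ => Finset.sum_congr rfl fun k' _ =>
          Finset.sum_congr rfl fun i _ => Finset.sum_congr rfl fun j _ => ?_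
        ring

lemma lemW1 {A B : Type*} [Fintype A] [Fintype B] (ξ : Matrix (A × B) (A × B) ℂ) :
    (Wmat ξ).trace = ((ptraceB ξ) * (ptraceB ξ)ᴴ).trace := by
  have : (Wmat ξ).trace = ∑ b : B, ∑ k' : B, ∑ i : A, ∑ j : A,
      ξ (i, b) (j, b) * star (ξ (i, k') (j, k')) := by
    simp [Matrix.trace, Wmat, Fintype.sum_prod_type]
  rw [this, sum_swap4]
  simp only [Matrix.trace, Matrix.diag_apply, Matrix.mul_apply, ptraceB,
    Matrix.conjTranspose_apply, Matrix.of_apply]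
  refine Finset.sum_congr rfl fun i _ => Finset.sum_congr rfl fun j _ => ?_
  rw [star_sum, Finset.sum_mul_sum]

lemma lemW2 {A B : Type*} [Fintype A] [Fintype B] [DecidableEq B]
    (ξ : Matrix (A × B) (A × B) ℂ) :
    (swapOp B * Wmat ξ).trace = (ξ * ξᴴ).trace := by
  have h1 : (swapOp B * Wmat ξ).trace = ∑ k : B, ∑ b : B, ∑ i : A, ∑ j : A,
      ξ (i, b) (j, k) * star (ξ (i, b) (j, k)) := by
    simp only [Matrix.trace, Matrix.diag_apply, Matrix.mul_apply, swapOp, Wmat,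
      Matrix.of_apply, Fintype.sum_prod_type, ite_mul, one_mul, zero_mul]
    simp [ite_and, Finset.sum_ite_eq, Finset.sum_ite_eq']
  rw [h1, sum_swap4']
  simp [Matrix.trace, Matrix.mul_apply, Fintype.sum_prod_type]

lemma trace_mul_conjT_re_nonneg {n : Type*} [Fintype n] (M : Matrix n n ℂ) :
    0 ≤ (M * Mᴴ).trace.re := by
  have : (M * Mᴴ).trace = ((∑ i, ∑ j, Complex.normSq (M i j) : ℝ) : ℂ) := by
    push_cast
    simp [Matrix.trace, Matrix.mul_apply, Matrix.conjTranspose_apply,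
      Complex.mul_conj]
  rw [this, Complex.ofReal_re]
  exact Finset.sum_nonneg fun i _ => Finset.sum_nonneg fun j _ => Complex.normSq_nonneg _

theorem two_design_frob_identity {A B : Type*} [Fintype A] [DecidableEq A]
    [Fintype B] [DecidableEq B] (t : ℕ) (P : Fin t → Matrix B B ℂ)
    (hproj : ∀ z, (P z).IsHermitian ∧ P z * P z = P z ∧ (P z).trace = 1)
    (hdesign : ((t : ℂ))⁻¹ • ∑ z, (P z) ⊗ₖ (P z) =
      (((Fintype.card B : ℂ) * ((Fintype.card B : ℂ) + 1)))⁻¹ •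
        ((1 : Matrix (B × B) (B × B) ℂ) + swapOp B))
    (ξ : Matrix (A × B) (A × B) ℂ) :
    (∑ z, ((Fintype.card B : ℂ)^2 / (t : ℂ)^2) *
        ((ptraceB (((1 : Matrix A A ℂ) ⊗ₖ P z) * ξ)) *
          (ptraceB (((1 : Matrix A A ℂ) ⊗ₖ P z) * ξ))ᴴ).trace
      = ((Fintype.card B : ℂ) / ((t : ℂ) * ((Fintype.card B : ℂ) + 1))) *
        (((ptraceB ξ) * (ptraceB ξ)ᴴ).trace + (ξ * ξᴴ).trace)) ∧
    ((∑ z, ((Fintype.card B : ℂ)^2 / (t : ℂ)^2) *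
        ((ptraceB (((1 : Matrix A A ℂ) ⊗ₖ P z) * ξ)) *
          (ptraceB (((1 : Matrix A A ℂ) ⊗ₖ P z) * ξ))ᴴ).trace).re
      ≥ (1 / (t : ℝ)) * ((Fintype.card B : ℝ) / ((Fintype.card B : ℝ) + 1)) * (frobNorm ξ)^2) := by
  rcases eq_or_ne t 0 with ht | ht
  · subst ht
    constructor
    · simp
    · simp [ge_iff_le]
  · have htc : (t : ℂ) ≠ 0 := Nat.cast_ne_zero.mpr ht
    have hS : (∑ z, (P z) ⊗ₖ (P z))
        = (t : ℂ) • ((((Fintype.card B : ℂ) * ((Fintype.card B : ℂ) + 1)))⁻¹ •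
            ((1 : Matrix (B × B) (B × B) ℂ) + swapOp B)) := by
      rw [← hdesign, smul_inv_smul₀ htc]
    have key : (∑ z, ((Fintype.card B : ℂ)^2 / (t : ℂ)^2) *
        ((ptraceB (((1 : Matrix A A ℂ) ⊗ₖ P z) * ξ)) *
          (ptraceB (((1 : Matrix A A ℂ) ⊗ₖ P z) * ξ))ᴴ).trace)
      = ((Fintype.card B : ℂ) / ((t : ℂ) * ((Fintype.card B : ℂ) + 1))) *
        (((ptraceB ξ) * (ptraceB ξ)ᴴ).trace + (ξ * ξᴴ).trace) := by
      rw [← Finset.mul_sum]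
      have h2 : (∑ z, ((ptraceB (((1 : Matrix A A ℂ) ⊗ₖ P z) * ξ)) *
          (ptraceB (((1 : Matrix A A ℂ) ⊗ₖ P z) * ξ))ᴴ).trace)
          = ((∑ z, (P z) ⊗ₖ (P z)) * Wmat ξ).trace := by
        rw [Finset.sum_mul, Matrix.trace_sum]
        exact Finset.sum_congr rfl fun z _ => lemA (P z) (hproj z).1 ξ
      rw [h2, hS, smul_mul_assoc, smul_mul_assoc, Matrix.trace_smul, Matrix.trace_smul,
        add_mul, one_mul, Matrix.trace_add, lemW1, lemW2]
      rw [smul_eq_mul, smul_eq_mul]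
      rcases eq_or_ne (Fintype.card B : ℂ) 0 with hd0 | hd0
      · rw [hd0]; simp
      · have hd1 : (Fintype.card B : ℂ) + 1 ≠ 0 := by
          have : ((Fintype.card B + 1 : ℕ) : ℂ) ≠ 0 := Nat.cast_ne_zero.mpr (Nat.succ_ne_zero _)
          push_cast at this; exact this
        field_simp
    refine ⟨key, ?_⟩
    rw [key]
    have hcast : ((Fintype.card B : ℂ) / ((t : ℂ) * ((Fintype.card B : ℂ) + 1)))
        = ((((Fintype.card B : ℝ) / ((t : ℝ) * ((Fintype.card B : ℝ) + 1))) : ℝ) : ℂ) := by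
      push_cast; ring
    rw [hcast, Complex.re_ofReal_mul, Complex.add_re]
    have hfrob : frobNorm ξ ^ 2 = ((ξ * ξᴴ).trace).re := by
      rw [frobNorm, Real.sq_sqrt]
      · rw [Matrix.trace_mul_comm]
      · have := trace_mul_conjT_re_nonneg ξᴴ
        rwa [Matrix.conjTranspose_conjTranspose] at this
    rw [hfrob]
    have h0 : 0 ≤ ((ptraceB ξ) * (ptraceB ξ)ᴴ).trace.re := trace_mul_conjT_re_nonneg _
    have hT : 0 ≤ (ξ * ξᴴ).trace.re := trace_mul_conjT_re_nonneg _
    have hr : (0:ℝ) ≤ (Fintype.card B : ℝ) / ((t : ℝ) * ((Fintype.card B : ℝ) + 1)) := by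
      positivity
    have heq : (1 / (t : ℝ)) * ((Fintype.card B : ℝ) / ((Fintype.card B : ℝ) + 1))
        = (Fintype.card B : ℝ) / ((t : ℝ) * ((Fintype.card B : ℝ) + 1)) := by
      rw [div_mul_div_comm, one_mul]
    rw [heq]
    nlinarith [hr, h0, hT]
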